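/- arXiv:2204.02128 — 2 statements merged into one kernel-verified Lean document; each statement's English description precedes it below -/
import Mathlib

section
/- Correctness criterion for guesses: in the setting of the weight bound lemma (finite rooted tree, anonymity $a$ superadditive over children, well-spread guessed set $S$ with $g(v)\geq a(v)$ for all $v\in S$ and $g(v)=a(v)$ whenever $v\in S$ is an only child), if $v\in S$ is heavy (i.e., $w(v)\geq g(v)$) and no strict descendant of $v$ in $S$ is heavy, then $g(v)=a(v)$. -/
open Finset
open scoped Classical

/-- `u` is a (weak) descendant of `v`: iterating `parent` from `u` reaches `v`. -/
def IsDesc {T : Type*} (r : T) (parent : T → T) (u v : T) : Prop :=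
  Relation.ReflTransGen (fun a b => a ≠ r ∧ parent a = b) u v

/-- `u` is a strict descendant of `v`. -/
def IsStrictDesc {T : Type*} (r : T) (parent : T → T) (u v : T) : Prop :=
  Relation.TransGen (fun a b => a ≠ r ∧ parent a = b) u v

/-- The children of a node `v` in the rooted tree. -/
noncomputable def childrenOf {T : Type*} [Fintype T] [DecidableEq T]
    (parent : T → T) (v : T) : Finset T :=
  Finset.univ.filter (fun c => parent c = v ∧ c ≠ v)

/-- The weight of `v`: the number of guessed nodes in the subtree rooted at `v`. -/
noncomputable def weightOf {T : Type*} [Fintype T] [DecidableEq T]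
    (r : T) (parent : T → T) (S : Finset T) (v : T) : ℕ :=
  (S.filter (fun u => IsDesc r parent u v)).card

set_option linter.unusedSectionVars false

section Aux
variable {T : Type*} [Fintype T] [DecidableEq T]
variable {r : T} {parent : T → T} {depth : T → ℕ}

lemma mem_childrenOf {c u : T} : c ∈ childrenOf parent u ↔ parent c = u ∧ c ≠ u := by
  simp [childrenOf]

lemma child_ne_root (hroot : parent r = r) {c u : T} (hc : c ∈ childrenOf parent u) :
    c ≠ r := by
  rw [mem_childrenOf] at hc
  rintro rfl
  exact hc.2 (by rw [← hc.1, hroot])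

lemma child_depth (hroot : parent r = r)
    (hdepth : ∀ v, v ≠ r → depth v = depth (parent v) + 1)
    {c u : T} (hc : c ∈ childrenOf parent u) : depth c = depth u + 1 := by
  rw [hdepth c (child_ne_root hroot hc), (mem_childrenOf.1 hc).1]

lemma isDesc_depth (hdepth : ∀ v, v ≠ r → depth v = depth (parent v) + 1)
    {x y : T} (h : IsDesc r parent x y) :
    ∃ k, parent^[k] x = y ∧ depth x = depth y + k := by
  induction h using Relation.ReflTransGen.head_induction_on with
  | refl => exact ⟨0, rfl, rfl⟩
  | head hab _ ih =>
    obtain ⟨k, hk, hd⟩ := ih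
    refine ⟨k + 1, ?_, ?_⟩
    · rw [Function.iterate_succ_apply, hab.2, hk]
    · rw [hdepth _ hab.1, hab.2, hd]; ring

lemma ancestor_eq (hdepth : ∀ v, v ≠ r → depth v = depth (parent v) + 1)
    {x y z : T} (hy : IsDesc r parent x y) (hz : IsDesc r parent x z)
    (hd : depth y = depth z) : y = z := by
  obtain ⟨k, hk, hk'⟩ := isDesc_depth hdepth hy
  obtain ⟨m, hm, hm'⟩ := isDesc_depth hdepth hz
  have : k = m := by omega
  rw [← hk, ← hm, this]

lemma not_isDesc_child (hroot : parent r = r)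
    (hdepth : ∀ v, v ≠ r → depth v = depth (parent v) + 1)
    {c u : T} (hc : c ∈ childrenOf parent u) : ¬ IsDesc r parent u c := by
  intro h
  obtain ⟨k, _, hd⟩ := isDesc_depth hdepth h
  have := child_depth hroot hdepth hc
  omega

lemma isDesc_iff (hroot : parent r = r)
    (hdepth : ∀ v, v ≠ r → depth v = depth (parent v) + 1)
    {x u : T} :
    IsDesc r parent x u ↔ x = u ∨ ∃ c ∈ childrenOf parent u, IsDesc r parent x c := by
  constructor
  · intro h
    rcases Relation.ReflTransGen.cases_tail h with h | ⟨c, hxc, hcr, hcu⟩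
    · exact Or.inl h.symm
    · refine Or.inr ⟨c, mem_childrenOf.2 ⟨hcu, ?_⟩, hxc⟩
      rintro rfl
      have := hdepth c hcr
      rw [hcu] at this
      omega
  · rintro (rfl | ⟨c, hc, hxc⟩)
    · exact Relation.ReflTransGen.refl
    · exact hxc.tail ⟨child_ne_root hroot hc, (mem_childrenOf.1 hc).1⟩

end Aux

section Main
variable {T : Type*} [Fintype T] [DecidableEq T]
variable {r : T} {parent : T → T} {depth : T → ℕ}

lemma weightOf_decomp (hroot : parent r = r)
    (hdepth : ∀ v, v ≠ r → depth v = depth (parent v) + 1)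
    (S : Finset T) (u : T) :
    weightOf r parent S u
      = (if u ∈ S then 1 else 0) + ∑ c ∈ childrenOf parent u, weightOf r parent S c := by
  classical
  have hset : S.filter (fun x => IsDesc r parent x u)
      = (S.filter (fun x => x = u)) ∪
        (childrenOf parent u).biUnion (fun c => S.filter (fun x => IsDesc r parent x c)) := by
    ext x
    simp only [mem_filter, mem_union, mem_biUnion]
    constructor
    · rintro ⟨hxS, hx⟩
      rcases (isDesc_iff hroot hdepth).1 hx with rfl | ⟨c, hc, hxc⟩
      · exact Or.inl ⟨hxS, rfl⟩
      · exact Or.inr ⟨c, hc, hxS, hxc⟩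
    · rintro (⟨hxS, rfl⟩ | ⟨c, hc, hxS, hxc⟩)
      · exact ⟨hxS, Relation.ReflTransGen.refl⟩
      · exact ⟨hxS, (isDesc_iff hroot hdepth).2 (Or.inr ⟨c, hc, hxc⟩)⟩
  have hdisj : Disjoint (S.filter (fun x => x = u))
      ((childrenOf parent u).biUnion fun c => S.filter (fun x => IsDesc r parent x c)) := by
    rw [Finset.disjoint_left]
    intro x hx hx'
    simp only [mem_filter] at hx
    obtain ⟨c, hc, hmem⟩ := Finset.mem_biUnion.1 hx'
    rw [Finset.mem_filter] at hmem
    have hxc := hmem.2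
    rw [hx.2] at hxc
    exact not_isDesc_child hroot hdepth hc hxc
  have hpw : ∀ c1 ∈ childrenOf parent u, ∀ c2 ∈ childrenOf parent u, c1 ≠ c2 →
      Disjoint (S.filter (fun x => IsDesc r parent x c1))
        (S.filter (fun x => IsDesc r parent x c2)) := by
    intro c1 h1 c2 h2 hne
    rw [Finset.disjoint_left]
    intro x hx hx'
    simp only [mem_filter] at hx hx'
    exact hne (ancestor_eq hdepth hx.2 hx'.2
      (by rw [child_depth hroot hdepth h1, child_depth hroot hdepth h2]))
  show (S.filter (fun x => IsDesc r parent x u)).card = _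
  rw [hset, Finset.card_union_of_disjoint hdisj, Finset.card_biUnion hpw]
  congr 1
  · rw [Finset.filter_eq']
    split <;> simp

lemma sum_children_bound (hroot : parent r = r)
    (hdepth : ∀ v, v ≠ r → depth v = depth (parent v) + 1)
    (a : T → ℕ) (hapos : ∀ v, 0 < a v)
    (hsuper : ∀ v, ∑ c ∈ childrenOf parent v, a c ≤ a v)
    (S : Finset T) (g : T → ℕ)
    (hg : ∀ v ∈ S, a v ≤ g v)
    (hws : ∀ u ∈ S, ∀ v ∈ S, depth u = depth v → u = v)
    (honly : ∀ v ∈ S, (∀ c, parent c = parent v → c ≠ parent v → c = v) → g v = a v) :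
    ∀ n (u : T), (Finset.univ.filter (fun x => IsDesc r parent x u)).card ≤ n →
      (∀ v' ∈ S, IsStrictDesc r parent v' u → ¬ (g v' ≤ weightOf r parent S v')) →
      (∑ c ∈ childrenOf parent u, weightOf r parent S c) + 1 ≤ a u := by
  intro n
  induction n with
  | zero =>
    intro u hcard _
    exfalso
    have : u ∈ Finset.univ.filter (fun x => IsDesc r parent x u) :=
      Finset.mem_filter.2 ⟨Finset.mem_univ _, Relation.ReflTransGen.refl⟩
    have := Finset.card_pos.2 ⟨u, this⟩
    omega
  | succ n ih =>
    intro u hcard hnh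
    have hdesc_le : ∀ c ∈ childrenOf parent u,
        (Finset.univ.filter (fun x => IsDesc r parent x c)).card ≤ n := by
      intro c hc
      have hsub : Finset.univ.filter (fun x => IsDesc r parent x c) ⊆
          (Finset.univ.filter (fun x => IsDesc r parent x u)).erase u := by
        intro x hx
        rw [Finset.mem_filter] at hx
        refine Finset.mem_erase.2 ⟨?_, Finset.mem_filter.2 ⟨Finset.mem_univ _, ?_⟩⟩
        · rintro rfl; exact not_isDesc_child hroot hdepth hc hx.2
        · exact hx.2.tail ⟨child_ne_root hroot hc, (mem_childrenOf.1 hc).1⟩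
      have h1 := Finset.card_le_card hsub
      have h2 : u ∈ Finset.univ.filter (fun x => IsDesc r parent x u) :=
        Finset.mem_filter.2 ⟨Finset.mem_univ _, Relation.ReflTransGen.refl⟩
      rw [Finset.card_erase_of_mem h2] at h1
      omega
    have hch_nh : ∀ c ∈ childrenOf parent u, ∀ v' ∈ S, IsStrictDesc r parent v' c →
        ¬ (g v' ≤ weightOf r parent S v') := fun c hc v' hv' hsd =>
      hnh v' hv' (hsd.tail ⟨child_ne_root hroot hc, (mem_childrenOf.1 hc).1⟩)
    have hw_le : ∀ c ∈ childrenOf parent u, weightOf r parent S c ≤ a c := by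
      intro c hc
      have h := ih c (hdesc_le c hc) (hch_nh c hc)
      rw [weightOf_decomp hroot hdepth]
      split <;> omega
    have hw_lt : ∀ c ∈ childrenOf parent u, c ∉ S → weightOf r parent S c + 1 ≤ a c := by
      intro c hc hcS
      have h := ih c (hdesc_le c hc) (hch_nh c hc)
      rw [weightOf_decomp hroot hdepth, if_neg hcS]
      omega
    by_cases hex : ∃ c ∈ childrenOf parent u, c ∉ S
    · obtain ⟨c0, hc0, hc0S⟩ := hex
      have key : (∑ c ∈ childrenOf parent u, weightOf r parent S c) + 1
          ≤ ∑ c ∈ childrenOf parent u, a c := by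
        rw [← Finset.add_sum_erase _ _ hc0, ← Finset.add_sum_erase _ a hc0]
        have h1 := hw_lt c0 hc0 hc0S
        have h2 : ∑ c ∈ (childrenOf parent u).erase c0, weightOf r parent S c
            ≤ ∑ c ∈ (childrenOf parent u).erase c0, a c :=
          Finset.sum_le_sum (fun c hc => hw_le c (Finset.mem_of_mem_erase hc))
        omega
      exact key.trans (hsuper u)
    · push_neg at hex
      rcases Finset.eq_empty_or_nonempty (childrenOf parent u) with he | ⟨c, hc⟩
      · rw [he]
        simp only [Finset.sum_empty, zero_add]; exact hapos u
      · have hone : childrenOf parent u = {c} := by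
          apply Finset.eq_singleton_iff_unique_mem.2 ⟨hc, ?_⟩
          intro c' hc'
          exact hws c' (hex c' hc') c (hex c hc)
            (by rw [child_depth hroot hdepth hc', child_depth hroot hdepth hc])
        have hcS := hex c hc
        have hpu : parent c = u := (mem_childrenOf.1 hc).1
        have hgc : g c = a c := by
          apply honly c hcS
          intro c' hpc' hne'
          rw [hpu] at hpc' hne'
          have : c' ∈ childrenOf parent u := mem_childrenOf.2 ⟨hpc', hne'⟩
          rw [hone] at this
          exact Finset.mem_singleton.1 this
        have hsd : IsStrictDesc r parent c u :=
          Relation.TransGen.single ⟨child_ne_root hroot hc, hpu⟩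
        have hnh' := hnh c hcS hsd
        have hac : a c ≤ a u := by
          have := hsuper u
          rw [hone, Finset.sum_singleton] at this
          exact this
        rw [hone, Finset.sum_singleton]
        omega

end Main

/-- Correctness criterion for guesses. In the setting of the weight bound lemma,
if `v ∈ S` is heavy and no strict descendant of `v` in `S` is heavy, then `g(v) = a(v)`. -/
theorem guess_correctness_criterion {T : Type*} [Fintype T] [DecidableEq T]
    (r : T) (parent : T → T) (depth : T → ℕ)
    (hroot : parent r = r) (hdepth0 : depth r = 0)
    (hdepth : ∀ v, v ≠ r → depth v = depth (parent v) + 1)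
    (hreach : ∀ v, IsDesc r parent v r)
    (a : T → ℕ) (hapos : ∀ v, 0 < a v)
    (hsuper : ∀ v, ∑ c ∈ childrenOf parent v, a c ≤ a v)
    (S : Finset T) (g : T → ℕ)
    (hg : ∀ v ∈ S, a v ≤ g v)
    (hws : ∀ u ∈ S, ∀ v ∈ S, depth u = depth v → u = v)
    (honly : ∀ v ∈ S, (∀ c, parent c = parent v → c ≠ parent v → c = v) → g v = a v)
    (v : T) (hv : v ∈ S) (hheavy : g v ≤ weightOf r parent S v)
    (hnodesc : ∀ v' ∈ S, IsStrictDesc r parent v' v →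
      ¬ (g v' ≤ weightOf r parent S v')) :
    g v = a v := by
  have hle := sum_children_bound hroot hdepth a hapos hsuper S g hg hws honly
    ((Finset.univ.filter (fun x => IsDesc r parent x v)).card) v le_rfl hnodesc
  rw [weightOf_decomp hroot hdepth, if_pos hv] at hheavy
  have h1 : a v ≤ g v := hg v hv
  omega
end

section
/- Locked-levels bound: let $T$ be a finite rooted tree with anonymity $a\colon T\to\mathbb{N}^+$ superadditive over children and $a(r)=n$ at the root $r$. Suppose the children of $r$ are partitioned into a single leader child $\ell$ with $a(\ell)=1$ and other children with total anonymity $n-1$. Let $S$ be a well-spread set of guessed nodes, none of which is a descendant of $\ell$ or equal to $\ell$ or $r$, with guesses satisfying $g\geq a$ on $S$ and $g=a$ on only-children, and suppose no node of $S$ is heavy. Then $|S|\leq n-1$. -/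
open Finset
open scoped Classical

section Aux
variable {T : Type*} {r : T} {parent : T → T} {depth : T → ℕ}

lemma lld_depth_le (hdepth : ∀ v, v ≠ r → depth v = depth (parent v) + 1)
    {u v : T} (h : IsDesc r parent u v) : depth v ≤ depth u := by
  induction h with
  | refl => exact le_rfl
  | tail h1 h2 ih =>
    rename_i b c
    have hb := hdepth b h2.1
    rw [h2.2] at hb
    omega

lemma lld_eq_of_depth_le (hdepth : ∀ v, v ≠ r → depth v = depth (parent v) + 1)
    {u v : T} (h : IsDesc r parent u v) (hle : depth u ≤ depth v) : u = v := by
  rcases Relation.ReflTransGen.cases_head h with h' | ⟨b, hs, hb⟩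
  · exact h'
  · have h1 := lld_depth_le hdepth hb
    have h2 := hdepth u hs.1
    rw [hs.2] at h2
    omega

lemma lld_total {u x y : T} (h1 : IsDesc r parent u x) (h2 : IsDesc r parent u y) :
    IsDesc r parent x y ∨ IsDesc r parent y x := by
  revert h2
  induction h1 using Relation.ReflTransGen.head_induction_on with
  | refl => exact fun h2 => Or.inl h2
  | head hs hb ih =>
    rename_i a b
    intro h2
    rcases Relation.ReflTransGen.cases_head h2 with h' | ⟨b', hs', hb'⟩
    · subst h'
      exact Or.inr (Relation.ReflTransGen.head hs hb)
    · have : b' = b := by rw [← hs.2, ← hs'.2]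
      subst this
      exact ih hb'

end Aux

section Aux2
variable {T : Type*} [Fintype T] [DecidableEq T] {r : T} {parent : T → T} {depth : T → ℕ}

lemma lld_child_ne_root (hroot : parent r = r) {v c : T} (hc : c ∈ childrenOf parent v) :
    c ≠ r := by
  simp only [childrenOf, mem_filter, mem_univ, true_and] at hc
  rintro rfl
  exact hc.2 (by rw [← hc.1, hroot])

lemma lld_child_depth (hroot : parent r = r)
    (hdepth : ∀ v, v ≠ r → depth v = depth (parent v) + 1)
    {v c : T} (hc : c ∈ childrenOf parent v) : depth c = depth v + 1 := by
  have hcr := lld_child_ne_root hroot hc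
  simp only [childrenOf, mem_filter, mem_univ, true_and] at hc
  rw [hdepth c hcr, hc.1]

lemma lld_desc_iff (hroot : parent r = r)
    (hdepth : ∀ v, v ≠ r → depth v = depth (parent v) + 1) {u v : T} :
    IsDesc r parent u v ↔ u = v ∨ ∃ c ∈ childrenOf parent v, IsDesc r parent u c := by
  constructor
  · intro h
    rcases Relation.ReflTransGen.cases_tail h with h' | ⟨c, hc, hs⟩
    · exact Or.inl h'.symm
    · refine Or.inr ⟨c, ?_, hc⟩
      simp only [childrenOf, mem_filter, mem_univ, true_and]
      refine ⟨hs.2, ?_⟩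
      intro hcv
      have := hdepth c hs.1
      rw [hs.2, hcv] at this
      omega
  · rintro (rfl | ⟨c, hc, hdc⟩)
    · exact Relation.ReflTransGen.refl
    · have hcr := lld_child_ne_root hroot hc
      simp only [childrenOf, mem_filter, mem_univ, true_and] at hc
      exact Relation.ReflTransGen.tail hdc ⟨hcr, hc.1⟩

lemma lld_disjoint (hroot : parent r = r)
    (hdepth : ∀ v, v ≠ r → depth v = depth (parent v) + 1)
    {v c1 c2 : T} (h1 : c1 ∈ childrenOf parent v) (h2 : c2 ∈ childrenOf parent v)
    (hne : c1 ≠ c2) {u : T} (hd1 : IsDesc r parent u c1) (hd2 : IsDesc r parent u c2) :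
    False := by
  have hdep1 := lld_child_depth hroot hdepth h1
  have hdep2 := lld_child_depth hroot hdepth h2
  rcases lld_total hd1 hd2 with h | h
  · exact hne (lld_eq_of_depth_le hdepth h (by omega))
  · exact hne ((lld_eq_of_depth_le hdepth h (by omega))).symm

lemma lld_weight_rec (hroot : parent r = r)
    (hdepth : ∀ v, v ≠ r → depth v = depth (parent v) + 1)
    (S : Finset T) (v : T) :
    weightOf r parent S v
      = (if v ∈ S then 1 else 0) + ∑ c ∈ childrenOf parent v, weightOf r parent S c := by
  classical
  set B := (childrenOf parent v).biUnion
      (fun c => S.filter (fun u => IsDesc r parent u c)) with hBdef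
  have hBcard : B.card = ∑ c ∈ childrenOf parent v, weightOf r parent S c := by
    rw [hBdef]
    apply card_biUnion
    intro c1 h1 c2 h2 hne
    rw [Function.onFun, Finset.disjoint_left]
    intro u hu1 hu2
    simp only [mem_filter] at hu1 hu2
    exact lld_disjoint hroot hdepth h1 h2 hne hu1.2 hu2.2
  have hvB : v ∉ B := by
    rw [hBdef]
    simp only [mem_biUnion, mem_filter, not_exists]
    intro c hc
    obtain ⟨hcc, -, hd⟩ := hc
    have := lld_depth_le hdepth hd
    have := lld_child_depth hroot hdepth hcc
    omega
  have hset : S.filter (fun u => IsDesc r parent u v)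
      = if v ∈ S then insert v B else B := by
    ext u
    simp only [mem_filter, hBdef, mem_biUnion]
    rw [lld_desc_iff hroot hdepth]
    by_cases hv : v ∈ S <;> simp [hv, mem_insert, mem_biUnion, mem_filter]
    · constructor
      · rintro ⟨hu, (rfl | ⟨c, hc, hd⟩)⟩
        · exact Or.inl rfl
        · exact Or.inr ⟨c, hc, hu, hd⟩
      · rintro (rfl | ⟨c, hc, hu, hd⟩)
        · exact ⟨hv, Or.inl rfl⟩
        · exact ⟨hu, Or.inr ⟨c, hc, hd⟩⟩
    · constructor
      · rintro ⟨hu, (rfl | ⟨c, hc, hd⟩)⟩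
        · exact absurd hu hv
        · exact ⟨c, hc, hu, hd⟩
      · rintro ⟨c, hc, hu, hd⟩
        exact ⟨hu, Or.inr ⟨c, hc, hd⟩⟩
  rw [weightOf, hset]
  by_cases hv : v ∈ S
  · simp only [hv, if_true]
    rw [card_insert_of_notMem hvB, hBcard]
    omega
  · simp only [hv, if_false]
    rw [hBcard]
    omega

end Aux2

/-- Locked-levels bound. With `a(r) = n`, the children of the root consisting of
a leader child `ℓ` with `a(ℓ) = 1` together with other children of total anonymity `n - 1`,
and a well-spread guessed set `S` avoiding `r`, `ℓ` and the subtree of `ℓ`, with `g ≥ a` on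
`S`, `g = a` on only-children, and no heavy node, we get `|S| ≤ n - 1`. -/
theorem locked_levels_bound {T : Type*} [Fintype T] [DecidableEq T]
    (r : T) (parent : T → T) (depth : T → ℕ)
    (hroot : parent r = r) (hdepth0 : depth r = 0)
    (hdepth : ∀ v, v ≠ r → depth v = depth (parent v) + 1)
    (hreach : ∀ v, IsDesc r parent v r)
    (a : T → ℕ) (hapos : ∀ v, 0 < a v)
    (hsuper : ∀ v, ∑ c ∈ childrenOf parent v, a c ≤ a v)
    (n : ℕ) (har : a r = n)
    (ℓ : T) (hℓchild : ℓ ∈ childrenOf parent r) (haℓ : a ℓ = 1)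
    (hrootsum : ∑ c ∈ childrenOf parent r, a c = n)
    (S : Finset T) (g : T → ℕ)
    (hg : ∀ v ∈ S, a v ≤ g v)
    (hws : ∀ u ∈ S, ∀ v ∈ S, depth u = depth v → u = v)
    (honly : ∀ v ∈ S, (∀ c, parent c = parent v → c ≠ parent v → c = v) → g v = a v)
    (hSnotr : r ∉ S)
    (hSnotℓ : ∀ v ∈ S, ¬ IsDesc r parent v ℓ)
    (hnoheavy : ∀ v ∈ S, ¬ (g v ≤ weightOf r parent S v)) :
    S.card ≤ n - 1 := by
  classical
  set w : T → ℕ := weightOf r parent S with hw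
  have hwrec : ∀ v, w v = (if v ∈ S then 1 else 0) + ∑ c ∈ childrenOf parent v, w c :=
    fun v => lld_weight_rec hroot hdepth S v
  set N : ℕ := Finset.univ.sup depth with hN
  have hdN : ∀ v : T, depth v ≤ N := fun v => Finset.le_sup (mem_univ v)
  have hexchild : ∀ v : T, 1 ≤ ∑ c ∈ childrenOf parent v, w c →
      ∃ c ∈ childrenOf parent v, 1 ≤ w c := by
    intro v hsum
    by_contra hno
    push_neg at hno
    have : ∑ c ∈ childrenOf parent v, w c = 0 :=
      Finset.sum_eq_zero (fun c hc => by have := hno c hc; omega)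
    omega
  have key : ∀ k, ∀ v : T, N - depth v ≤ k →
      1 ≤ ∑ c ∈ childrenOf parent v, w c → ∑ c ∈ childrenOf parent v, w c + 1 ≤ a v := by
    intro k
    induction k with
    | zero =>
      intro v hk hsum
      obtain ⟨c0, hc0, hwc0⟩ := hexchild v hsum
      have h1 := lld_child_depth hroot hdepth hc0
      have h2 := hdN c0
      omega
    | succ k ih =>
      intro v hk hsum
      obtain ⟨c0, hc0, hwc0⟩ := hexchild v hsum
      have ihc : ∀ c ∈ childrenOf parent v, 1 ≤ ∑ d ∈ childrenOf parent c, w d →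
          ∑ d ∈ childrenOf parent c, w d + 1 ≤ a c := by
        intro c hc
        apply ih c
        have h1 := lld_child_depth hroot hdepth hc
        have h2 := hdN c
        omega
      have hwa : ∀ c ∈ childrenOf parent v, w c ≤ a c := by
        intro c hc
        have hrec := hwrec c
        have hpos := hapos c
        rcases Nat.eq_zero_or_pos (∑ d ∈ childrenOf parent c, w d) with h0 | h1
        · rw [h0] at hrec
          split at hrec <;> omega
        · have := ihc c hc h1
          split at hrec <;> omega
      have hwa' : ∀ c ∈ childrenOf parent v, c ∉ S → 1 ≤ w c → w c + 1 ≤ a c := by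
        intro c hc hcS hwc
        have hrec := hwrec c
        rw [if_neg hcS] at hrec
        have h1 : 1 ≤ ∑ d ∈ childrenOf parent c, w d := by omega
        have := ihc c hc h1
        omega
      have hsum_le : ∀ c1 ∈ childrenOf parent v, w c1 + 1 ≤ a c1 →
          ∑ c ∈ childrenOf parent v, w c + 1 ≤ a v := by
        intro c1 hc1 hlt
        have h1 : ∑ c ∈ (childrenOf parent v).erase c1, w c
            ≤ ∑ c ∈ (childrenOf parent v).erase c1, a c :=
          Finset.sum_le_sum (fun c hc => hwa c (Finset.mem_of_mem_erase hc))
        have h2 := Finset.add_sum_erase _ w hc1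
        have h3 := Finset.add_sum_erase _ a hc1
        have h4 := hsuper v
        omega
      by_cases hc0S : c0 ∈ S
      · by_cases hother : ∃ c' ∈ childrenOf parent v, c' ≠ c0
        · obtain ⟨c', hc', hne⟩ := hother
          by_cases hdeep : ∃ c1 ∈ childrenOf parent v, c1 ≠ c0 ∧ 1 ≤ w c1
          · obtain ⟨c1, hc1, hne1, hwc1⟩ := hdeep
            have hc1S : c1 ∉ S := by
              intro hc1S
              exact hne1 (hws c1 hc1S c0 hc0S
                (by rw [lld_child_depth hroot hdepth hc1, lld_child_depth hroot hdepth hc0]))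
            exact hsum_le c1 hc1 (hwa' c1 hc1 hc1S hwc1)
          · push_neg at hdeep
            have hsum_eq : ∑ c ∈ childrenOf parent v, w c = w c0 :=
              Finset.sum_eq_single_of_mem c0 hc0
                (fun c hc hne2 => by have := hdeep c hc hne2; omega)
            have hc'e : c' ∈ (childrenOf parent v).erase c0 := Finset.mem_erase.mpr ⟨hne, hc'⟩
            have h2 : a c' ≤ ∑ c ∈ (childrenOf parent v).erase c0, a c :=
              Finset.single_le_sum (fun i _ => Nat.zero_le _) hc'e
            have h3 := Finset.add_sum_erase _ a hc0
            have h4 := hwa c0 hc0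
            have h5 := hapos c'
            have h6 := hsuper v
            omega
        · push_neg at hother
          have hpc0 : parent c0 = v ∧ c0 ≠ v := by
            simpa [childrenOf] using hc0
          have honlyc : ∀ c, parent c = parent c0 → c ≠ parent c0 → c = c0 := by
            intro c h1 h2
            rw [hpc0.1] at h1 h2
            exact hother c (by simp [childrenOf, h1, h2])
          have hga := honly c0 hc0S honlyc
          have hnh := hnoheavy c0 hc0S
          have hwlt : w c0 + 1 ≤ a c0 := by
            omega
          have hsum_eq : ∑ c ∈ childrenOf parent v, w c = w c0 :=
            Finset.sum_eq_single_of_mem c0 hc0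
              (fun c hc hne2 => absurd (hother c hc) hne2)
          have h3 : a c0 ≤ ∑ c ∈ childrenOf parent v, a c :=
            Finset.single_le_sum (fun i _ => Nat.zero_le _) hc0
          have h4 := hsuper v
          omega
      · exact hsum_le c0 hc0 (hwa' c0 hc0 hc0S hwc0)
  have hWB : ∀ v : T, w v ≤ a v := by
    intro v
    have hrec := hwrec v
    have hpos := hapos v
    rcases Nat.eq_zero_or_pos (∑ c ∈ childrenOf parent v, w c) with h0 | h1
    · rw [h0] at hrec
      split at hrec <;> omega
    · have := key N v (Nat.sub_le _ _) h1
      split at hrec <;> omega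
  have hdecomp : S = ((childrenOf parent r).erase ℓ).biUnion (fun c => S.filter (fun u => IsDesc r parent u c)) := by
    ext u
    simp only [mem_biUnion, mem_filter]
    constructor
    · intro hu
      have hur : u ≠ r := fun h => hSnotr (h ▸ hu)
      rcases (lld_desc_iff hroot hdepth).mp (hreach u) with h | ⟨c, hc, hd⟩
      · exact absurd h hur
      · refine ⟨c, ?_, hu, hd⟩
        refine Finset.mem_erase.mpr ⟨?_, hc⟩
        rintro rfl
        exact hSnotℓ u hu hd
    · rintro ⟨c, hc, hu, -⟩
      exact hu
  have hcard : S.card = ∑ c ∈ (childrenOf parent r).erase ℓ, w c := by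
    conv_lhs => rw [hdecomp]
    apply card_biUnion
    intro c1 h1 c2 h2 hne
    rw [Function.onFun, Finset.disjoint_left]
    intro u hu1 hu2
    simp only [mem_filter] at hu1 hu2
    exact lld_disjoint hroot hdepth (Finset.mem_of_mem_erase h1)
      (Finset.mem_of_mem_erase h2) hne hu1.2 hu2.2
  have hfin : ∑ c ∈ (childrenOf parent r).erase ℓ, w c ≤ ∑ c ∈ (childrenOf parent r).erase ℓ, a c := Finset.sum_le_sum (fun c _ => hWB c)
  have hsumC : ∑ c ∈ (childrenOf parent r).erase ℓ, a c = n - 1 := by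
    have h := Finset.add_sum_erase _ a hℓchild
    rw [hrootsum, haℓ] at h
    omega
  have hn : 1 ≤ n := by
    have := hapos ℓ
    have h := Finset.add_sum_erase _ a hℓchild
    rw [hrootsum, haℓ] at h
    omega
  omega
end
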